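/- Let g > 0, let e₃ = (0,0,1) ∈ ℝ³, let a ∈ ℝ³ with a + g e₃ ≠ 0, and let ψ ∈ ℝ with r_g = (cos ψ, sin ψ, 0). Define r₃ = (a + g e₃)/‖a + g e₃‖, assume r₃ × r_g ≠ 0, and define r₂ = (r₃ × r_g)/‖r₃ × r_g‖ and r₁ = r₂ × r₃. Then the 3 × 3 matrix R with columns r₁, r₂, r₃ is a rotation matrix: Rᵀ R = I and det R = 1. -/
import Mathlib

open Matrix

/-- The Euclidean norm on `ℝ³` (represented as `Fin 3 → ℝ`). -/
noncomputable def enorm3 (v : Fin 3 → ℝ) : ℝ :=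
  Real.sqrt (v 0 ^ 2 + v 1 ^ 2 + v 2 ^ 2)

lemma enorm3_unit (v : Fin 3 → ℝ) (hv : v ≠ 0) :
    ((enorm3 v)⁻¹ • v) 0 ^ 2 + ((enorm3 v)⁻¹ • v) 1 ^ 2 + ((enorm3 v)⁻¹ • v) 2 ^ 2 = 1 := by
  have hs : 0 ≤ v 0 ^ 2 + v 1 ^ 2 + v 2 ^ 2 := by positivity
  have hpos : 0 < v 0 ^ 2 + v 1 ^ 2 + v 2 ^ 2 := by
    rcases hs.lt_or_eq with h | h
    · exact h
    · exfalso; apply hv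
      have h0 : v 0 = 0 := by nlinarith [sq_nonneg (v 0), sq_nonneg (v 1), sq_nonneg (v 2)]
      have h1 : v 1 = 0 := by nlinarith [sq_nonneg (v 0), sq_nonneg (v 1), sq_nonneg (v 2)]
      have h2 : v 2 = 0 := by nlinarith [sq_nonneg (v 0), sq_nonneg (v 1), sq_nonneg (v 2)]
      funext i; fin_cases i <;> simpa
  have hn : 0 < enorm3 v := Real.sqrt_pos.mpr hpos
  have hsq : (enorm3 v) ^ 2 = v 0 ^ 2 + v 1 ^ 2 + v 2 ^ 2 := Real.sq_sqrt hs
  simp only [Pi.smul_apply, smul_eq_mul]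
  field_simp
  linarith [hsq]

/-- Differential-flatness attitude reconstruction: with `r₃` the normalized thrust
direction `(a + g e₃)/‖a + g e₃‖`, `r₂ = (r₃ × r_g)/‖r₃ × r_g‖` and `r₁ = r₂ × r₃`,
the matrix `R` with columns `r₁, r₂, r₃` is a rotation matrix: `Rᵀ R = I` and
`det R = 1`. -/
theorem flatness_attitude_is_rotation (g : ℝ) (hg : 0 < g) (a : Fin 3 → ℝ) (ψ : ℝ)
    (e₃ : Fin 3 → ℝ) (he₃ : e₃ = ![0, 0, 1])
    (rg : Fin 3 → ℝ) (hrg : rg = ![Real.cos ψ, Real.sin ψ, 0])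
    (ha : a + g • e₃ ≠ 0)
    (r₃ : Fin 3 → ℝ) (hr₃ : r₃ = (enorm3 (a + g • e₃))⁻¹ • (a + g • e₃))
    (hcross : crossProduct r₃ rg ≠ 0)
    (r₂ : Fin 3 → ℝ)
    (hr₂ : r₂ = (enorm3 (crossProduct r₃ rg))⁻¹ • (crossProduct r₃ rg))
    (r₁ : Fin 3 → ℝ) (hr₁ : r₁ = crossProduct r₂ r₃)
    (R : Matrix (Fin 3) (Fin 3) ℝ)
    (hR : R = Matrix.of fun i j => ![r₁, r₂, r₃] j i) :
    Rᵀ * R = 1 ∧ R.det = 1 := by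
  have h3 : r₃ 0 ^ 2 + r₃ 1 ^ 2 + r₃ 2 ^ 2 = 1 := by
    rw [hr₃]; exact enorm3_unit _ ha
  have h2 : r₂ 0 ^ 2 + r₂ 1 ^ 2 + r₂ 2 ^ 2 = 1 := by
    rw [hr₂]; exact enorm3_unit _ hcross
  have horth : r₂ 0 * r₃ 0 + r₂ 1 * r₃ 1 + r₂ 2 * r₃ 2 = 0 := by
    rw [hr₂]
    simp only [cross_apply, Pi.smul_apply, smul_eq_mul, Matrix.cons_val_zero,
      Matrix.cons_val_one, Matrix.head_cons, Matrix.cons_val_two, Matrix.tail_cons]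
    ring
  have h10 : r₁ 0 = r₂ 1 * r₃ 2 - r₂ 2 * r₃ 1 := by rw [hr₁, cross_apply]; rfl
  have h11 : r₁ 1 = r₂ 2 * r₃ 0 - r₂ 0 * r₃ 2 := by rw [hr₁, cross_apply]; rfl
  have h12 : r₁ 2 = r₂ 0 * r₃ 1 - r₂ 1 * r₃ 0 := by rw [hr₁, cross_apply]; rfl
  have d11 : r₁ 0 * r₁ 0 + r₁ 1 * r₁ 1 + r₁ 2 * r₁ 2 = 1 := by
    rw [h10, h11, h12]
    linear_combination (r₃ 0 ^ 2 + r₃ 1 ^ 2 + r₃ 2 ^ 2) * h2 + h3 -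
      (r₂ 0 * r₃ 0 + r₂ 1 * r₃ 1 + r₂ 2 * r₃ 2) * horth
  have d12 : r₁ 0 * r₂ 0 + r₁ 1 * r₂ 1 + r₁ 2 * r₂ 2 = 0 := by
    rw [h10, h11, h12]; ring
  have d13 : r₁ 0 * r₃ 0 + r₁ 1 * r₃ 1 + r₁ 2 * r₃ 2 = 0 := by
    rw [h10, h11, h12]; ring
  have d22 : r₂ 0 * r₂ 0 + r₂ 1 * r₂ 1 + r₂ 2 * r₂ 2 = 1 := by nlinarith [h2]
  have d33 : r₃ 0 * r₃ 0 + r₃ 1 * r₃ 1 + r₃ 2 * r₃ 2 = 1 := by nlinarith [h3]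
  constructor
  · ext i j
    fin_cases i <;> fin_cases j <;>
      simp [hR, Matrix.mul_apply, Fin.sum_univ_three, Matrix.one_apply] <;>
      linarith [d11, d12, d13, d22, d33, horth]
  · rw [hR]
    rw [Matrix.det_fin_three]
    simp only [Matrix.of_apply, Matrix.cons_val_zero, Matrix.cons_val_one, Matrix.head_cons,
      Matrix.cons_val_two, Matrix.tail_cons]
    rw [h10, h11, h12]
    linear_combination (r₃ 0 ^ 2 + r₃ 1 ^ 2 + r₃ 2 ^ 2) * h2 + h3 -
      (r₂ 0 * r₃ 0 + r₂ 1 * r₃ 1 + r₂ 2 * r₃ 2) * horth
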